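/- Let p and q be distinct primes, α, β ≥ 1, and n = p^α q^β. For any integer x ≥ 2, neither p^2 nor q^2 divides Φ_n(x). -/

import Mathlib

open Polynomial Finset

lemma geom_not_sq_dvd (p : ℕ) (hp : p.Prime) (hodd : p ≠ 2) (y : ℤ) :
    ¬ ((p : ℤ) ^ 2 ∣ ∑ i ∈ range p, y ^ i) := by
  intro h
  haveI : Fact p.Prime := ⟨hp⟩
  -- Step 1: mod p, y ≡ 1
  have hpdvd : (p : ℤ) ∣ ∑ i ∈ range p, y ^ i :=
    dvd_trans (dvd_pow_self _ two_ne_zero) h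
  have hz : ((y : ZMod p)) = 1 := by
    have h0 : (∑ i ∈ range p, (y : ZMod p) ^ i) = 0 := by
      have := (ZMod.intCast_zmod_eq_zero_iff_dvd _ p).2 hpdvd
      push_cast at this
      exact this
    have h1 := geom_sum_mul (y : ZMod p) p
    rw [h0, zero_mul, ZMod.pow_card] at h1
    exact sub_eq_zero.mp h1.symm
  -- Step 2: p ∣ y - 1 in ℤ, write y = 1 + p * t
  have hy1 : (p : ℤ) ∣ y - 1 := by
    have : ((y - 1 : ℤ) : ZMod p) = 0 := by push_cast; rw [hz]; ring
    exact (ZMod.intCast_zmod_eq_zero_iff_dvd _ p).1 this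
  obtain ⟨t, ht⟩ := hy1
  have hyt : y = 1 + p * t := by linarith
  -- Step 3: work in ZMod (p^2)
  set R := ZMod (p ^ 2)
  have hp2 : ((p : R)) ^ 2 = 0 := by
    have : ((p ^ 2 : ℕ) : R) = 0 := ZMod.natCast_self _
    push_cast at this
    exact this
  set u : R := (p : R) * ((t : ℤ) : R) with hu
  have hu2 : u ^ 2 = 0 := by
    have : u ^ 2 = (p : R) ^ 2 * ((t : ℤ) : R) ^ 2 := by rw [hu]; ring
    rw [this, hp2, zero_mul]
  have hbin : ∀ i : ℕ, (1 + u) ^ i = 1 + (i : R) * u := by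
    intro i
    induction i with
    | zero => simp
    | succ k ih =>
      have : (1 + u) ^ (k + 1) = (1 + (k : R) * u) * (1 + u) := by
        rw [pow_succ, ih]
      rw [this]
      have : (1 + (k : R) * u) * (1 + u) = 1 + ((k : R) + 1) * u + (k : R) * u ^ 2 := by ring
      rw [this, hu2]
      push_cast
      ring
  -- the sum in R is 0
  have hs0 : (∑ i ∈ range p, ((y : R)) ^ i) = 0 := by
    have : ((p : ℤ) ^ 2) = ((p ^ 2 : ℕ) : ℤ) := by push_cast; ring
    rw [this] at h
    have := (ZMod.intCast_zmod_eq_zero_iff_dvd _ (p ^ 2)).2 h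
    push_cast at this
    exact this
  have hyR : (y : R) = 1 + u := by rw [hyt]; push_cast; ring
  rw [hyR] at hs0
  -- compute the sum
  have hsum : (∑ i ∈ range p, (1 + u) ^ i) = (p : R) + ((∑ i ∈ range p, i : ℕ) : R) * u := by
    calc (∑ i ∈ range p, (1 + u) ^ i) = ∑ i ∈ range p, (1 + (i : R) * u) := by
          exact Finset.sum_congr rfl fun i _ => hbin i
      _ = (p : R) + ((∑ i ∈ range p, i : ℕ) : R) * u := by
          rw [Finset.sum_add_distrib, Finset.sum_const, card_range, Nat.cast_sum,
            ← Finset.sum_mul]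
          simp
  -- p divides the Gauss sum since p is odd
  obtain ⟨s, hsgauss⟩ : p ∣ ∑ i ∈ range p, i := by
    have h2 : (∑ i ∈ range p, i) * 2 = p * (p - 1) := Finset.sum_range_id_mul_two p
    have : p ∣ (∑ i ∈ range p, i) * 2 := h2 ▸ Dvd.intro _ rfl
    rcases (Nat.Prime.dvd_mul hp).1 this with h' | h'
    · exact h'
    · exact absurd ((Nat.prime_dvd_prime_iff_eq hp Nat.prime_two).1 h') hodd
  have hzero : ((∑ i ∈ range p, i : ℕ) : R) * u = 0 := by
    rw [hsgauss]
    push_cast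
    have : (p : R) * (s : R) * u = (p : R) ^ 2 * ((s : R) * ((t : ℤ) : R)) := by
      rw [hu]; ring
    exact (congrArg (· * u) (Nat.cast_mul (α := R) p s)).trans (this.trans (by rw [hp2, zero_mul]))
  rw [hsum, hzero, add_zero] at hs0
  -- p = 0 in ZMod (p^2) is absurd
  have : (p : ℕ) ^ 2 ∣ p := (ZMod.natCast_eq_zero_iff _ _).1 hs0
  have hle := Nat.le_of_dvd hp.pos this
  nlinarith [hp.two_le]

lemma cyclo_dvd_geom (p m : ℕ) (hp : 2 ≤ p) (hm : 1 ≤ m) :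
    cyclotomic (p * m) ℤ ∣ ∑ i ∈ range p, ((X : ℤ[X]) ^ m) ^ i := by
  have hmem : m ∈ (p * m).properDivisors := by
    rw [Nat.mem_properDivisors]
    exact ⟨⟨p, mul_comm p m⟩, lt_mul_of_one_lt_left hm hp⟩
  have hdvd := X_pow_sub_one_mul_cyclotomic_dvd_X_pow_sub_one_of_dvd ℤ hmem
  have hgeo : (∑ i ∈ range p, ((X : ℤ[X]) ^ m) ^ i) * ((X : ℤ[X]) ^ m - 1)
      = (X : ℤ[X]) ^ (p * m) - 1 := by
    rw [geom_sum_mul, ← pow_mul, mul_comm m p]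
  rw [← hgeo] at hdvd
  have hne : (X : ℤ[X]) ^ m - 1 ≠ 0 := by
    intro h
    have := congrArg natDegree (sub_eq_zero.mp h)
    simp [natDegree_X_pow] at this
    omega
  obtain ⟨c, hc⟩ := hdvd
  refine ⟨c, ?_⟩
  have : ((X : ℤ[X]) ^ m - 1) * (∑ i ∈ range p, ((X : ℤ[X]) ^ m) ^ i)
      = ((X : ℤ[X]) ^ m - 1) * (cyclotomic (p * m) ℤ * c) := by
    linear_combination hc
  exact mul_left_cancel₀ hne this

lemma key_odd (p m : ℕ) (hp : p.Prime) (hodd : p ≠ 2) (hm : 1 ≤ m) (x : ℤ) :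
    ¬ ((p : ℤ) ^ 2 ∣ (cyclotomic (p * m) ℤ).eval x) := by
  intro h
  have hdvd := cyclo_dvd_geom p m hp.two_le hm
  have heval : (cyclotomic (p * m) ℤ).eval x ∣ ∑ i ∈ range p, (x ^ m) ^ i := by
    have := Polynomial.eval_dvd (x := x) hdvd
    simpa [eval_finset_sum] using this
  exact geom_not_sq_dvd p hp hodd (x ^ m) (h.trans heval)

lemma key_two (n : ℕ) (hn : 1 < n) (hnpp : ∀ {r : ℕ}, r.Prime → ∀ k : ℕ, r ^ k ≠ n) (x : ℤ) :
    ¬ ((2 : ℤ) ∣ (cyclotomic n ℤ).eval x) := by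
  intro h
  have h0 : (((cyclotomic n ℤ).eval x : ℤ) : ZMod 2) = 0 :=
    (ZMod.intCast_zmod_eq_zero_iff_dvd _ 2).2 h
  have hmap : (((cyclotomic n ℤ).eval x : ℤ) : ZMod 2)
      = (cyclotomic n (ZMod 2)).eval ((x : ZMod 2)) := by
    rw [← map_cyclotomic_int n (ZMod 2), eval_intCast_map]
    rfl
  rw [hmap] at h0
  rcases (by decide : ∀ z : ZMod 2, z = 0 ∨ z = 1) (x : ZMod 2) with hz | hz
  · rw [hz, ← coeff_zero_eq_eval_zero, cyclotomic_coeff_zero _ hn] at h0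
    exact one_ne_zero h0
  · rw [hz, eval_one_cyclotomic_not_prime_pow hnpp] at h0
    exact one_ne_zero h0

lemma key_main (p q α β : ℕ) (hp : p.Prime) (hq : q.Prime) (hpq : p ≠ q)
    (hα : 1 ≤ α) (hβ : 1 ≤ β) (x : ℤ) :
    ¬ ((p : ℤ) ^ 2 ∣ (cyclotomic (p ^ α * q ^ β) ℤ).eval x) := by
  by_cases hp2 : p = 2
  · -- p = 2 : cyclotomic value is odd
    subst hp2
    have hn1 : 1 < 2 ^ α * q ^ β := by
      have h1 : 2 ≤ 2 ^ α := Nat.one_lt_two_pow_iff.2 (by omega)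
      have h2 : 1 ≤ q ^ β := Nat.one_le_iff_ne_zero.2 (pow_ne_zero _ hq.pos.ne')
      calc 1 < 2 := one_lt_two
        _ ≤ 2 ^ α := h1
        _ = 2 ^ α * 1 := (mul_one _).symm
        _ ≤ 2 ^ α * q ^ β := Nat.mul_le_mul_left _ h2
    have hnpp : ∀ {r : ℕ}, r.Prime → ∀ k : ℕ, r ^ k ≠ 2 ^ α * q ^ β := by
      intro r hr k hk
      have hpd : 2 ∣ r ^ k := hk ▸ Dvd.dvd.mul_right (dvd_pow_self 2 (by omega)) _
      have hqd : q ∣ r ^ k := hk ▸ Dvd.dvd.mul_left (dvd_pow_self q (by omega)) _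
      have h2r : 2 = r := ((Nat.prime_dvd_prime_iff_eq Nat.prime_two hr).1
        (Nat.prime_two.dvd_of_dvd_pow hpd))
      have hqr : q = r := ((Nat.prime_dvd_prime_iff_eq hq hr).1
        (hq.dvd_of_dvd_pow hqd))
      exact hpq (h2r.trans hqr.symm)
    intro h
    exact key_two _ hn1 hnpp x (dvd_trans (dvd_pow_self (2 : ℤ) two_ne_zero) (by exact_mod_cast h))
  · -- p odd
    have hrw : p ^ α * q ^ β = p * (p ^ (α - 1) * q ^ β) := by
      rw [← mul_assoc, ← pow_succ']
      congr 2
      omega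
    rw [hrw]
    have hm : 1 ≤ p ^ (α - 1) * q ^ β :=
      Nat.one_le_iff_ne_zero.2 (Nat.mul_ne_zero (pow_ne_zero _ hp.pos.ne')
        (pow_ne_zero _ hq.pos.ne'))
    exact key_odd p _ hp hp2 hm x

theorem stmt_10 (p q α β n : ℕ) (hp : p.Prime) (hq : q.Prime) (hpq : p ≠ q)
    (hα : 1 ≤ α) (hβ : 1 ≤ β) (hn : n = p ^ α * q ^ β) (x : ℤ) (hx : 2 ≤ x) :
    ¬ ((p : ℤ) ^ 2 ∣ (cyclotomic n ℤ).eval x) ∧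
      ¬ ((q : ℤ) ^ 2 ∣ (cyclotomic n ℤ).eval x) := by
  subst hn
  refine ⟨key_main p q α β hp hq hpq hα hβ x, ?_⟩
  have := key_main q p β α hq hp hpq.symm hβ hα x
  rwa [mul_comm] at this
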